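/- Let 1 < p < ∞ and x = (x_n), y = (y_n) ∈ ℓ_p. Then x ⊥_B y if and only if Σ_n conj(sgn(x_n)) |x_n|^{p-1} y_n = 0. -/

import Mathlib

open ENNReal

/-- The sign of a scalar: `z/|z|` for `z ≠ 0` and `0` for `z = 0`. -/
noncomputable def sgn {𝕂 : Type*} [RCLike 𝕂] (z : 𝕂) : 𝕂 :=
  if z = 0 then 0 else z / (‖z‖ : 𝕂)

section Aux

open RCLike Real Filter Set

variable {𝕂 : Type*} [RCLike 𝕂]

lemma sgn_norm_le_one (z : 𝕂) : ‖sgn z‖ ≤ 1 := by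
  unfold sgn
  split_ifs with h
  · simp
  · rw [norm_div, RCLike.norm_ofReal, abs_of_nonneg (norm_nonneg z),
      div_self (norm_ne_zero_iff.2 h)]

lemma normsq_expand (a c : 𝕂) (t : ℝ) :
    ‖a + (t : 𝕂) * c‖ ^ 2
      = ‖a‖ ^ 2 + (2 * re ((starRingEnd 𝕂) a * c)) * t + ‖c‖ ^ 2 * t ^ 2 := by
  have h := norm_add_sq (𝕜 := 𝕂) a ((t : 𝕂) * c)
  rw [RCLike.inner_apply] at h
  rw [h]
  have h1 : (t : 𝕂) * c * (starRingEnd 𝕂) a = (t : 𝕂) * ((starRingEnd 𝕂) a * c) := by ring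
  rw [h1, RCLike.re_ofReal_mul, norm_mul, RCLike.norm_ofReal]
  ring_nf
  rw [sq_abs]

end Aux
section Aux2

open RCLike Real Filter Set

variable {𝕂 : Type*} [RCLike 𝕂]

lemma abs_re_conj_sgn_mul (z c : 𝕂) : |re ((starRingEnd 𝕂) (sgn z) * c)| ≤ ‖c‖ := by
  calc |re ((starRingEnd 𝕂) (sgn z) * c)| ≤ ‖(starRingEnd 𝕂) (sgn z) * c‖ :=
        RCLike.abs_re_le_norm _
    _ = ‖sgn z‖ * ‖c‖ := by rw [norm_mul, RCLike.norm_conj]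
    _ ≤ 1 * ‖c‖ := mul_le_mul_of_nonneg_right (sgn_norm_le_one z) (norm_nonneg c)
    _ = ‖c‖ := one_mul _

lemma hasDerivAt_norm_rpow_zero (P : ℝ) (hP : 1 < P) (a c : 𝕂) :
    HasDerivAt (fun t : ℝ => ‖a + (t : 𝕂) * c‖ ^ P)
      (P * ‖a‖ ^ (P - 1) * re ((starRingEnd 𝕂) (sgn a) * c)) 0 := by
  rcases eq_or_ne a 0 with rfl | ha
  · -- `a = 0` : derivative is zero
    have hzero : P * ‖(0 : 𝕂)‖ ^ (P - 1) * re ((starRingEnd 𝕂) (sgn (0 : 𝕂)) * c) = 0 := by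
      simp [sgn]
    rw [hzero]
    have hfun : (fun t : ℝ => ‖(0 : 𝕂) + (t : 𝕂) * c‖ ^ P)
        = fun t : ℝ => |t| ^ P * ‖c‖ ^ P := by
      funext t
      rw [zero_add, norm_mul, RCLike.norm_ofReal,
        Real.mul_rpow (abs_nonneg t) (norm_nonneg c)]
    rw [hfun, hasDerivAt_iff_tendsto_slope]
    apply squeeze_zero_norm' (a := fun t : ℝ => |t| ^ (P - 1) * ‖c‖ ^ P)
    · filter_upwards [self_mem_nhdsWithin] with t (ht : t ≠ 0)
      have habs : 0 < |t| := abs_pos.2 ht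
      have hsplit : |t| ^ P = |t| ^ (P - 1) * |t| := by
        nth_rewrite 1 [show P = P - 1 + 1 by ring]
        exact Real.rpow_add_one habs.ne' _
      have h1 : slope (fun t : ℝ => |t| ^ P * ‖c‖ ^ P) 0 t = |t| ^ P * ‖c‖ ^ P / t := by
        rw [slope_def_field]
        norm_num [Real.zero_rpow (show P ≠ 0 by positivity)]
      rw [h1, Real.norm_eq_abs, abs_div, abs_of_nonneg (by positivity : (0:ℝ) ≤ |t| ^ P * ‖c‖ ^ P),
        hsplit]
      apply le_of_eq
      field_simp
    · have h1 : Tendsto (fun t : ℝ => |t|) (nhds 0) (nhds 0) := by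
        simpa using continuous_abs.tendsto (0 : ℝ)
      have h2 : Tendsto (fun s : ℝ => s ^ (P - 1)) (nhds (0 : ℝ)) (nhds 0) := by
        have := (Real.continuousAt_rpow_const 0 (P - 1) (Or.inr (by linarith))).tendsto
        simpa [Real.zero_rpow (show P - 1 ≠ 0 by linarith)] using this
      have h3 : Tendsto (fun t : ℝ => |t| ^ (P - 1) * ‖c‖ ^ P) (nhds 0) (nhds 0) := by
        simpa using (h2.comp h1).mul_const (‖c‖ ^ P)
      exact h3.mono_left nhdsWithin_le_nhds
  · -- `a ≠ 0`
    have hna : (0:ℝ) < ‖a‖ :=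
      lt_of_le_of_ne (norm_nonneg a) fun h => ha (norm_eq_zero.1 h.symm)
    set R : ℝ := re ((starRingEnd 𝕂) a * c) with hR
    have hN : HasDerivAt (fun t : ℝ => ‖a‖ ^ 2 + 2 * R * t + ‖c‖ ^ 2 * t ^ 2) (2 * R) 0 := by
      have := (((hasDerivAt_id (0:ℝ)).const_mul (2 * R)).const_add (‖a‖ ^ 2)).add
        ((hasDerivAt_pow 2 (0:ℝ)).const_mul (‖c‖ ^ 2))
      simpa [Pi.add_def] using this
    have hN0 : (‖a‖ ^ 2 + 2 * R * (0:ℝ) + ‖c‖ ^ 2 * (0:ℝ) ^ 2) = ‖a‖ ^ 2 := by ring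
    have hkey := hN.rpow_const (p := P / 2) (Or.inl (by rw [hN0]; positivity))
    have hfun : (fun t : ℝ => (‖a‖ ^ 2 + 2 * R * t + ‖c‖ ^ 2 * t ^ 2) ^ (P / 2))
        = fun t : ℝ => ‖a + (t : 𝕂) * c‖ ^ P := by
      funext t
      rw [← normsq_expand, ← Real.rpow_natCast ‖a + (t:𝕂)*c‖ 2, ← Real.rpow_mul (norm_nonneg _)]
      push_cast
      rw [show (2:ℝ) * (P/2) = P by ring]
    rw [hfun] at hkey
    convert hkey using 1
    have hsgn : (starRingEnd 𝕂) (sgn a) = ((‖a‖ : ℝ) : 𝕂)⁻¹ * (starRingEnd 𝕂) a := by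
      rw [sgn, if_neg ha, map_div₀, RCLike.conj_ofReal]
      ring
    have hre : re ((starRingEnd 𝕂) (sgn a) * c) = ‖a‖⁻¹ * R := by
      rw [hsgn, mul_assoc, ← RCLike.ofReal_inv, RCLike.re_ofReal_mul, hR]
    rw [hre, hN0]
    have h2 : ((‖a‖ : ℝ) ^ 2) ^ (P / 2 - 1) = ‖a‖ ^ (P - 2) := by
      rw [← Real.rpow_natCast ‖a‖ 2, ← Real.rpow_mul (norm_nonneg a)]
      norm_num
      ring_nf
    have h3 : ‖a‖ ^ (P - 1) * ‖a‖⁻¹ = ‖a‖ ^ (P - 2) := by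
      rw [← Real.rpow_neg_one ‖a‖, ← Real.rpow_add hna]
      ring_nf
    rw [h2]
    rw [show P * ‖a‖ ^ (P - 1) * (‖a‖⁻¹ * R) = P * (‖a‖ ^ (P - 1) * ‖a‖⁻¹) * R by ring, h3]
    ring

end Aux2

section Aux3

open RCLike Real Filter Set

variable {𝕂 : Type*} [RCLike 𝕂]

lemma aux_hasDerivAt_norm_rpow (P : ℝ) (hP : 1 < P) (a c : 𝕂) (t₀ : ℝ) :
    HasDerivAt (fun t : ℝ => ‖a + (t : 𝕂) * c‖ ^ P)
      (P * ‖a + (t₀ : 𝕂) * c‖ ^ (P - 1) *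
        re ((starRingEnd 𝕂) (sgn (a + (t₀ : 𝕂) * c)) * c)) t₀ := by
  have h0 := hasDerivAt_norm_rpow_zero P hP (a + (t₀ : 𝕂) * c) c
  have hshift : HasDerivAt (fun t : ℝ => t - t₀) 1 t₀ := (hasDerivAt_id t₀).sub_const t₀
  have hval : (fun t : ℝ => t - t₀) t₀ = 0 := by simp
  have hcomp := HasDerivAt.comp (h₂ := fun s : ℝ => ‖(a + (t₀ : 𝕂) * c) + (s : 𝕂) * c‖ ^ P)
    t₀ (hval ▸ h0) hshift
  have hfun : ((fun s : ℝ => ‖(a + (t₀ : 𝕂) * c) + (s : 𝕂) * c‖ ^ P) ∘ fun t : ℝ => t - t₀)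
      = fun t : ℝ => ‖a + (t : 𝕂) * c‖ ^ P := by
    funext t
    simp only [Function.comp_apply]
    rw [show (a + (t₀ : 𝕂) * c) + ((t - t₀ : ℝ) : 𝕂) * c = a + (t : 𝕂) * c by
      push_cast; ring]
  rw [hfun] at hcomp
  simpa using hcomp

lemma aux_convexOn_norm_rpow (P : ℝ) (hP : 1 ≤ P) (a c : 𝕂) :
    ConvexOn ℝ Set.univ (fun t : ℝ => ‖a + (t : 𝕂) * c‖ ^ P) := by
  have hrpow := convexOn_rpow hP
  refine ⟨convex_univ, fun s _ t _ θ τ hθ hτ hθτ => ?_⟩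
  simp only [smul_eq_mul]
  have hmix : a + ((θ * s + τ * t : ℝ) : 𝕂) * c
      = (θ : 𝕂) * (a + (s : 𝕂) * c) + (τ : 𝕂) * (a + (t : 𝕂) * c) := by
    have hθτ' : (θ : 𝕂) + (τ : 𝕂) = 1 := by
      rw [← RCLike.ofReal_add, hθτ, RCLike.ofReal_one]
    push_cast
    linear_combination -(a : 𝕂) * hθτ'
  have hnorm : ‖a + ((θ * s + τ * t : ℝ) : 𝕂) * c‖
      ≤ θ * ‖a + (s : 𝕂) * c‖ + τ * ‖a + (t : 𝕂) * c‖ := by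
    rw [hmix]
    refine (norm_add_le _ _).trans ?_
    rw [norm_mul, norm_mul, RCLike.norm_ofReal, RCLike.norm_ofReal,
      abs_of_nonneg hθ, abs_of_nonneg hτ]
  calc ‖a + ((θ * s + τ * t : ℝ) : 𝕂) * c‖ ^ P
      ≤ (θ * ‖a + (s : 𝕂) * c‖ + τ * ‖a + (t : 𝕂) * c‖) ^ P :=
        Real.rpow_le_rpow (norm_nonneg _) hnorm (by linarith)
    _ ≤ θ * ‖a + (s : 𝕂) * c‖ ^ P + τ * ‖a + (t : 𝕂) * c‖ ^ P := by
        have := hrpow.2 (Set.mem_Ici.2 (norm_nonneg (a + (s : 𝕂) * c)))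
          (Set.mem_Ici.2 (norm_nonneg (a + (t : 𝕂) * c))) hθ hτ hθτ
        simpa using this

lemma aux_tangent_line {f : ℝ → ℝ} {d : ℝ} (hf : ConvexOn ℝ Set.univ f)
    (hd : HasDerivAt f d 0) : f 0 + d ≤ f 1 := by
  have htend : Tendsto (slope f 0) (nhdsWithin 0 (Set.Ioi 0)) (nhds d) :=
    (hasDerivAt_iff_tendsto_slope.1 hd).mono_left
      (nhdsWithin_mono 0 fun t (ht : t ∈ Set.Ioi 0) => ne_of_gt ht)
  have hle : d ≤ slope f 0 1 := by
    refine le_of_tendsto htend ?_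
    filter_upwards [Ioo_mem_nhdsGT_of_mem (Set.mem_Ico.2 ⟨le_refl 0, one_pos⟩)]
      with t ht
    have h := hf.secant_mono (Set.mem_univ 0) (Set.mem_univ t) (Set.mem_univ 1)
      (ne_of_gt ht.1) one_ne_zero ht.2.le
    rw [slope_def_field, slope_def_field]
    simpa using h
  rw [slope_def_field] at hle
  linarith

end Aux3

section Aux4

open RCLike Real Filter Set

variable {𝕂 : Type*} [RCLike 𝕂]

lemma aux_rpow_add_le (P : ℝ) (hP : 0 ≤ P) {u v : ℝ} (hu : 0 ≤ u) (hv : 0 ≤ v) :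
    (u + v) ^ P ≤ 2 ^ P * (u ^ P + v ^ P) := by
  have hmax : (0:ℝ) ≤ max u v := le_max_of_le_left hu
  have h1 : u + v ≤ 2 * max u v := by
    rcases le_total u v with h | h
    · rw [max_eq_right h]; linarith
    · rw [max_eq_left h]; linarith
  have h2 : max u v ^ P ≤ u ^ P + v ^ P := by
    rcases le_total u v with h | h
    · rw [max_eq_right h]
      exact le_add_of_nonneg_left (Real.rpow_nonneg hu _)
    · rw [max_eq_left h]
      exact le_add_of_nonneg_right (Real.rpow_nonneg hv _)
  calc (u + v) ^ P ≤ (2 * max u v) ^ P :=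
        Real.rpow_le_rpow (by positivity) h1 hP
    _ = 2 ^ P * max u v ^ P := Real.mul_rpow (by norm_num) hmax
    _ ≤ 2 ^ P * (u ^ P + v ^ P) :=
        mul_le_mul_of_nonneg_left h2 (Real.rpow_nonneg (by norm_num) _)

lemma aux_prod_le (P : ℝ) (hP : 1 < P) {u v α : ℝ} (hu : 0 ≤ u) (hv : 0 ≤ v)
    (h1 : u ≤ α) (h2 : v ≤ α) : u ^ (P - 1) * v ≤ α ^ P := by
  have hα : 0 ≤ α := hu.trans h1
  rcases eq_or_lt_of_le hα with rfl | hpos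
  · have hu0 : u = 0 := le_antisymm h1 hu
    have hv0 : v = 0 := le_antisymm h2 hv
    rw [hu0, hv0, Real.zero_rpow (show P - 1 ≠ 0 by intro h; linarith),
      Real.zero_rpow (show P ≠ 0 by intro h; linarith), zero_mul]
  · have key := Real.rpow_add_one hpos.ne' (P - 1)
    rw [show P - 1 + 1 = P by ring] at key
    calc u ^ (P - 1) * v ≤ α ^ (P - 1) * α :=
          mul_le_mul (Real.rpow_le_rpow hu h1 (by linarith)) h2 hv
            (Real.rpow_nonneg hα _)
      _ = α ^ P := key.symm

lemma aux_deriv_bound (P : ℝ) (hP : 1 < P) {z c : 𝕂} {α : ℝ}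
    (h1 : ‖z‖ ≤ α) (h2 : ‖c‖ ≤ α) :
    ‖P * ‖z‖ ^ (P - 1) * re ((starRingEnd 𝕂) (sgn z) * c)‖ ≤ P * α ^ P := by
  rw [Real.norm_eq_abs, abs_mul, abs_mul,
    abs_of_nonneg (show (0:ℝ) ≤ P by linarith),
    abs_of_nonneg (Real.rpow_nonneg (norm_nonneg z) _), mul_assoc]
  refine mul_le_mul_of_nonneg_left ?_ (show (0:ℝ) ≤ P by linarith)
  calc ‖z‖ ^ (P - 1) * |re ((starRingEnd 𝕂) (sgn z) * c)|
      ≤ ‖z‖ ^ (P - 1) * ‖c‖ :=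
        mul_le_mul_of_nonneg_left (abs_re_conj_sgn_mul z c)
          (Real.rpow_nonneg (norm_nonneg z) _)
    _ ≤ α ^ P := aux_prod_le P hP (norm_nonneg z) (norm_nonneg c) h1 h2

lemma aux_rearrange (P : ℝ) (a b μ : 𝕂) :
    P * ‖a‖ ^ (P - 1) * re ((starRingEnd 𝕂) (sgn a) * (μ * b))
      = P * re (μ * ((starRingEnd 𝕂) (sgn a) * ((‖a‖ ^ (P - 1) : ℝ) : 𝕂) * b)) := by
  rw [show μ * ((starRingEnd 𝕂) (sgn a) * ((‖a‖ ^ (P - 1) : ℝ) : 𝕂) * b)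
      = ((‖a‖ ^ (P - 1) : ℝ) : 𝕂) * ((starRingEnd 𝕂) (sgn a) * (μ * b)) by ring,
    RCLike.re_ofReal_mul]
  ring

end Aux4

open RCLike

theorem ellp_BJ_orthogonality {𝕂 : Type*} [RCLike 𝕂]
    (p : ℝ≥0∞) (hp : 1 < p) (hp' : p ≠ ∞)
    (x y : lp (fun _ : ℕ => 𝕂) p) :
    (∀ lam : 𝕂, ‖x‖ ≤ ‖x + lam • y‖) ↔
      ∑' n : ℕ, (starRingEnd 𝕂) (sgn (x n)) *
        ((‖x n‖ ^ (p.toReal - 1) : ℝ) : 𝕂) * y n = 0 := by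
  haveI : Fact (1 ≤ p) := ⟨hp.le⟩
  set P := p.toReal with hPdef
  have hP1 : 1 < P := by
    rw [hPdef, ← ENNReal.toReal_one]
    exact (ENNReal.toReal_lt_toReal ENNReal.one_ne_top hp').mpr hp
  have hP0 : 0 < P := lt_trans one_pos hP1
  set w : ℕ → 𝕂 := fun n =>
    (starRingEnd 𝕂) (sgn (x n)) * ((‖x n‖ ^ (P - 1) : ℝ) : 𝕂) * y n with hw
  have hxs : Summable (fun n => ‖x n‖ ^ P) := (lp.memℓp x).summable hP0
  have hys : Summable (fun n => ‖y n‖ ^ P) := (lp.memℓp y).summable hP0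
  have hαs : ∀ M : ℝ, 0 ≤ M → Summable (fun n => (‖x n‖ + M * ‖y n‖) ^ P) := by
    intro M hM
    have hsum : Summable (fun n => 2 ^ P * (‖x n‖ ^ P + (M * ‖y n‖) ^ P)) := by
      have h1 : Summable (fun n => (M * ‖y n‖) ^ P) := by
        have : (fun n => (M * ‖y n‖) ^ P) = fun n => M ^ P * ‖y n‖ ^ P := by
          funext n; rw [Real.mul_rpow hM (norm_nonneg _)]
        rw [this]; exact hys.mul_left _
      exact (hxs.add h1).mul_left _
    exact Summable.of_nonneg_of_le
      (fun n => Real.rpow_nonneg (by positivity) _)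
      (fun n => aux_rpow_add_le P hP0.le (norm_nonneg _) (by positivity)) hsum
  have hws : Summable w := by
    apply Summable.of_norm
    refine Summable.of_nonneg_of_le (fun n => norm_nonneg _) (fun n => ?_)
      (hαs 1 zero_le_one)
    have : ‖w n‖ ≤ ‖x n‖ ^ (P - 1) * ‖y n‖ := by
      rw [hw]
      calc ‖(starRingEnd 𝕂) (sgn (x n)) * ((‖x n‖ ^ (P - 1) : ℝ) : 𝕂) * y n‖
          = ‖sgn (x n)‖ * |‖x n‖ ^ (P - 1)| * ‖y n‖ := by
            rw [norm_mul, norm_mul, RCLike.norm_conj, RCLike.norm_ofReal]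
        _ ≤ 1 * |‖x n‖ ^ (P - 1)| * ‖y n‖ :=
            mul_le_mul_of_nonneg_right
              (mul_le_mul_of_nonneg_right (sgn_norm_le_one (x n)) (abs_nonneg _))
              (norm_nonneg _)
        _ = ‖x n‖ ^ (P - 1) * ‖y n‖ := by
            rw [one_mul, abs_of_nonneg (Real.rpow_nonneg (norm_nonneg _) _)]
    refine this.trans ?_
    exact aux_prod_le P hP1 (norm_nonneg _) (norm_nonneg _)
      (by nlinarith [norm_nonneg (x n), norm_nonneg (y n)])
      (by nlinarith [norm_nonneg (x n), norm_nonneg (y n)])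
  have hco : ∀ (lam : 𝕂) (n : ℕ), (x + lam • y) n = x n + lam * y n := by
    intro lam n
    simp [lp.coeFn_add, lp.coeFn_smul]
    rfl
  have htsum_re : ∀ μ : 𝕂, ∑' n, P * re (μ * w n) = P * re (μ * ∑' n, w n) := by
    intro μ
    rw [tsum_mul_left]
    congr 1
    rw [← RCLike.re_tsum 𝕂 (hws.mul_left μ), tsum_mul_left]
  constructor
  · -- orthogonality implies the sum vanishes
    intro hortho
    have hre : ∀ μ : 𝕂, re (μ * ∑' n, w n) = 0 := by
      intro μ
      set g : ℕ → ℝ → ℝ := fun n t => ‖x n + (t : 𝕂) * (μ * y n)‖ ^ P with hg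
      set g' : ℕ → ℝ → ℝ := fun n t =>
        P * ‖x n + (t : 𝕂) * (μ * y n)‖ ^ (P - 1) *
          re ((starRingEnd 𝕂) (sgn (x n + (t : 𝕂) * (μ * y n))) * (μ * y n)) with hg'
      have hu : Summable (fun n => P * (‖x n‖ + ‖μ‖ * ‖y n‖) ^ P) :=
        (hαs ‖μ‖ (norm_nonneg μ)).mul_left P
      have hgd : ∀ n t, t ∈ Metric.ball (0:ℝ) 1 → HasDerivAt (g n) (g' n t) t :=
        fun n t _ => aux_hasDerivAt_norm_rpow P hP1 (x n) (μ * y n) t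
      have hgb : ∀ n t, t ∈ Metric.ball (0:ℝ) 1 →
          ‖g' n t‖ ≤ P * (‖x n‖ + ‖μ‖ * ‖y n‖) ^ P := by
        intro n t ht
        rw [Metric.mem_ball, Real.dist_eq, sub_zero] at ht
        refine aux_deriv_bound P hP1 ?_ ?_
        · calc ‖x n + (t:𝕂) * (μ * y n)‖ ≤ ‖x n‖ + ‖(t:𝕂) * (μ * y n)‖ := norm_add_le _ _
            _ ≤ ‖x n‖ + ‖μ‖ * ‖y n‖ := by
              rw [norm_mul, RCLike.norm_ofReal, norm_mul]
              nlinarith [abs_nonneg t, norm_nonneg (y n), norm_nonneg μ, ht.le,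
                mul_nonneg (norm_nonneg μ) (norm_nonneg (y n))]
        · rw [norm_mul]
          nlinarith [norm_nonneg (x n)]
      have hg0s : Summable (fun n => g n 0) := by
        refine hxs.congr fun n => ?_
        simp [hg]
      have hDeriv : HasDerivAt (fun t => ∑' n, g n t) (∑' n, g' n 0) 0 :=
        hasDerivAt_tsum_of_isPreconnected hu Metric.isOpen_ball
          (convex_ball (0:ℝ) 1).isPreconnected hgd hgb
          (Metric.mem_ball_self one_pos) hg0s (Metric.mem_ball_self one_pos)
      have hfun : ∀ t : ℝ, ∑' n, g n t = ‖x + ((t:𝕂) * μ) • y‖ ^ P := by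
        intro t
        rw [lp.norm_rpow_eq_tsum hP0]
        refine tsum_congr fun n => ?_
        rw [hco ((t:𝕂) * μ) n, hg]
        ring_nf
        rfl
      have hmin : IsLocalMin (fun t => ∑' n, g n t) 0 := by
        apply Filter.Eventually.of_forall
        intro t
        show (∑' n, g n 0) ≤ ∑' n, g n t
        rw [hfun t, hfun 0]
        have h0 : ‖x + (((0:ℝ):𝕂) * μ) • y‖ = ‖x‖ := by
          norm_num
        rw [h0]
        exact Real.rpow_le_rpow (norm_nonneg _) (hortho _) hP0.le
      have hzero := hmin.hasDerivAt_eq_zero hDeriv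
      have hg'0 : ∀ n, g' n 0 = P * re (μ * w n) := by
        intro n
        have h0 : x n + ((0:ℝ):𝕂) * (μ * y n) = x n := by norm_num
        simp only [hg', hw, h0]
        exact aux_rearrange P (x n) (y n) μ
      rw [show (∑' n, g' n 0) = ∑' n, P * re (μ * w n) from tsum_congr hg'0,
        htsum_re μ] at hzero
      have := mul_eq_zero.mp hzero
      rcases this with h | h
      · linarith
      · exact h
    have h1 := hre ((starRingEnd 𝕂) (∑' n, w n))
    rw [RCLike.conj_mul, ← RCLike.ofReal_pow, RCLike.ofReal_re] at h1
    exact norm_eq_zero.mp (pow_eq_zero_iff two_ne_zero |>.mp h1)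
  · -- the sum vanishes implies orthogonality
    intro hS lam
    have hsum_d : Summable (fun n => P * re (lam * w n)) := by
      have h1 : Summable (fun n => lam * w n) := hws.mul_left lam
      exact ((RCLike.hasSum_re 𝕂 h1.hasSum).summable).mul_left P
    have hRHSsum : Summable (fun n => ‖x n + lam * y n‖ ^ P) := by
      refine ((lp.memℓp (x + lam • y)).summable hP0).congr fun n => ?_
      rw [hco lam n]
    have hkey : ∀ n : ℕ, ‖x n‖ ^ P + P * re (lam * w n) ≤ ‖x n + lam * y n‖ ^ P := by
      intro n
      have hconv := aux_convexOn_norm_rpow P hP1.le (x n) (lam * y n)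
      have hder := hasDerivAt_norm_rpow_zero P hP1 (x n) (lam * y n)
      have htan' : ‖x n + ((0:ℝ):𝕂) * (lam * y n)‖ ^ P +
          P * ‖x n‖ ^ (P - 1) * re ((starRingEnd 𝕂) (sgn (x n)) * (lam * y n))
          ≤ ‖x n + ((1:ℝ):𝕂) * (lam * y n)‖ ^ P := aux_tangent_line hconv hder
      have e0 : x n + ((0:ℝ):𝕂) * (lam * y n) = x n := by norm_num
      have e1 : x n + ((1:ℝ):𝕂) * (lam * y n) = x n + lam * y n := by norm_num
      rw [e0, e1, aux_rearrange P (x n) (y n) lam] at htan'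
      simp only [hw]
      exact htan'
    have hS0 : P * re (lam * ∑' n, w n) = 0 := by
      rw [hS, mul_zero, map_zero, mul_zero]
    have step1 : ‖x‖ ^ P ≤ ‖x + lam • y‖ ^ P := by
      have e2 : ∑' n, (‖x n‖ ^ P + P * re (lam * w n))
          = ‖x‖ ^ P := by
        rw [Summable.tsum_add hxs hsum_d, htsum_re lam, hS0, add_zero,
          lp.norm_rpow_eq_tsum hP0 x]
      have e3 : ‖x + lam • y‖ ^ P = ∑' n, ‖x n + lam * y n‖ ^ P := by
        rw [lp.norm_rpow_eq_tsum hP0]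
        exact tsum_congr fun n => by rw [hco lam n]
      rw [← e2, e3]
      exact Summable.tsum_le_tsum hkey (hxs.add hsum_d) hRHSsum
    exact (Real.rpow_le_rpow_iff (norm_nonneg x) (norm_nonneg _) hP0).mp step1
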